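/- arXiv:2106.15607 — 2 statements merged into one kernel-verified Lean document; each statement's English description precedes it below -/
import Mathlib

section
/- Let $k \in \mathbb{N}$ with $k \geq 2$. There exists a constant $C = C(k)$ such that for every rational $p/q$ in lowest terms with $q \geq 1$, every real $x$, and every positive integer $n$ satisfying $n^k |\beta| \leq 1$ where $\beta := x - p/q$, one has $\Big| \sum_{l=1}^{n} e(l^k x) - \frac{\xi_{p/q}}{q} \sum_{l=1}^{n} e(l^k \beta) \Big| \leq C q$. -/
/-- `e t = exp(2πit)`. -/
noncomputable def e (t : ℝ) : ℂ := Complex.exp (2 * Real.pi * Complex.I * t)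

/-- The Gauss-type sum `ξ_{p/q} = ∑_{t=0}^{q-1} e(t^k p/q)`. -/
noncomputable def xi (k : ℕ) (p : ℤ) (q : ℕ) : ℂ :=
  ∑ t ∈ Finset.range q, e ((t : ℝ) ^ k * p / q)

lemma e_eq (t : ℝ) : e t = Complex.exp ((2 * Real.pi * t : ℝ) * Complex.I) := by
  unfold e; push_cast; ring_nf

lemma e_norm (t : ℝ) : ‖e t‖ = 1 := by
  rw [e_eq]; exact Complex.norm_exp_ofReal_mul_I _

lemma e_add (s t : ℝ) : e (s + t) = e s * e t := by
  unfold e; rw [← Complex.exp_add]; push_cast; ring_nf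

lemma e_int_add (t : ℝ) (m : ℤ) : e (t + m) = e t := by
  rw [e_add]
  have h1 : e (m : ℝ) = 1 := by
    unfold e
    rw [show 2 * (Real.pi : ℂ) * Complex.I * ((m : ℝ) : ℂ)
        = (m : ℂ) * (2 * Real.pi * Complex.I) by push_cast; ring]
    exact Complex.exp_int_mul_two_pi_mul_I m
  rw [h1, mul_one]

lemma norm_exp_mul_I_sub_one_le (θ : ℝ) :
    ‖Complex.exp ((θ : ℂ) * Complex.I) - 1‖ ≤ |θ| := by
  have h1 : Complex.exp ((θ : ℂ) * Complex.I) - 1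
      = ((Real.cos θ - 1 : ℝ) : ℂ) + ((Real.sin θ : ℝ) : ℂ) * Complex.I := by
    rw [Complex.exp_mul_I, ← Complex.ofReal_cos, ← Complex.ofReal_sin]
    push_cast; ring
  rw [h1, Complex.norm_def, Complex.normSq_add_mul_I]
  have h2 : (Real.cos θ - 1) ^ 2 + Real.sin θ ^ 2 = 4 * Real.sin (θ / 2) ^ 2 := by
    have hcos : Real.cos θ = 1 - 2 * Real.sin (θ / 2) ^ 2 := by
      have hpy2 := Real.sin_sq_add_cos_sq (θ / 2)
      have hc : Real.cos θ = Real.cos (2 * (θ / 2)) := by ring_nf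
      rw [hc, Real.cos_two_mul']
      nlinarith
    have hpy := Real.sin_sq_add_cos_sq θ
    nlinarith
  rw [h2]
  have h3 : 4 * Real.sin (θ / 2) ^ 2 ≤ θ ^ 2 := by
    have := Real.sin_sq_le_sq (x := θ / 2)
    nlinarith
  calc Real.sqrt (4 * Real.sin (θ / 2) ^ 2) ≤ Real.sqrt (θ ^ 2) :=
        Real.sqrt_le_sqrt h3
    _ = |θ| := Real.sqrt_sq_eq_abs θ

lemma e_dist (s t : ℝ) : ‖e s - e t‖ ≤ 2 * Real.pi * |s - t| := by
  have h1 : e s = e t * e (s - t) := by rw [← e_add]; ring_nf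
  have h2 : ‖e s - e t‖ = ‖e (s - t) - 1‖ := by
    rw [h1, show e t * e (s - t) - e t = e t * (e (s - t) - 1) by ring,
      norm_mul, e_norm, one_mul]
  rw [h2, e_eq]
  calc ‖Complex.exp (((2 * Real.pi * (s - t) : ℝ)) * Complex.I) - 1‖
      ≤ |2 * Real.pi * (s - t)| := norm_exp_mul_I_sub_one_le _
    _ = 2 * Real.pi * |s - t| := by
        rw [abs_mul, abs_of_nonneg (by positivity : (0:ℝ) ≤ 2 * Real.pi)]

lemma e_period (k : ℕ) (p : ℤ) (q : ℕ) (hq : q ≠ 0) (a b : ℕ) (h : a % q = b % q) :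
    e ((a : ℝ) ^ k * p / q) = e ((b : ℝ) ^ k * p / q) := by
  have hmod : (a : ℤ) ≡ (b : ℤ) [ZMOD (q : ℤ)] := by
    unfold Int.ModEq
    omega
  obtain ⟨m, hm⟩ := (hmod.pow k).dvd
  have hq' : (q : ℝ) ≠ 0 := Nat.cast_ne_zero.2 hq
  have hb : (b : ℝ) ^ k = (a : ℝ) ^ k + (q : ℝ) * (m : ℤ) := by
    have h9 : (b : ℤ) ^ k = (a : ℤ) ^ k + (q : ℤ) * m := by linarith [hm]
    exact_mod_cast congrArg (Int.cast : ℤ → ℝ) h9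
  have hr : (b : ℝ) ^ k * p / q = (a : ℝ) ^ k * p / q + ((m * p : ℤ) : ℝ) := by
    push_cast
    field_simp
    push_cast at hb
    linear_combination (p : ℝ) * hb
  rw [hr, e_int_add]

lemma sum_range_zmod (q : ℕ) [NeZero q] (f : ZMod q → ℂ) :
    ∑ t ∈ Finset.range q, f (t : ZMod q) = ∑ z : ZMod q, f z := by
  refine Finset.sum_nbij' (fun t => (t : ZMod q)) (fun z => z.val) ?_ ?_ ?_ ?_ ?_
  · intro a _; exact Finset.mem_univ _
  · intro z _; exact Finset.mem_range.2 (ZMod.val_lt z)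
  · intro a ha; exact ZMod.val_cast_of_lt (Finset.mem_range.1 ha)
  · intro z _; exact ZMod.natCast_rightInverse z
  · intro a _; rfl

lemma block_sum (k : ℕ) (p : ℤ) (q : ℕ) (hq : 1 ≤ q) (s : ℕ) :
    ∑ t ∈ Finset.range q, e (((s + t : ℕ) : ℝ) ^ k * p / q) = xi k p q := by
  haveI : NeZero q := ⟨by omega⟩
  set g : ZMod q → ℂ := fun z => e ((z.val : ℝ) ^ k * p / q) with hg
  have hcast : ∀ l : ℕ, e ((l : ℝ) ^ k * p / q) = g ((l : ZMod q)) := by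
    intro l
    apply e_period k p q (by omega)
    rw [ZMod.val_natCast]
    exact (Nat.mod_mod_of_dvd l dvd_rfl).symm
  have h1 : ∑ t ∈ Finset.range q, e (((s + t : ℕ) : ℝ) ^ k * p / q)
      = ∑ t ∈ Finset.range q, g ((s : ZMod q) + (t : ZMod q)) := by
    refine Finset.sum_congr rfl fun t _ => ?_
    rw [hcast (s + t)]; push_cast; ring_nf
  have h2 : ∑ t ∈ Finset.range q, g ((s : ZMod q) + (t : ZMod q))
      = ∑ z : ZMod q, g ((s : ZMod q) + z) :=
    sum_range_zmod q (fun z => g ((s : ZMod q) + z))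
  have h3 : ∑ z : ZMod q, g ((s : ZMod q) + z) = ∑ z : ZMod q, g z :=
    Fintype.sum_equiv (Equiv.addLeft (s : ZMod q)) _ _ (fun z => rfl)
  have h4 : ∑ z : ZMod q, g z = xi k p q := by
    rw [← sum_range_zmod q g]
    unfold xi
    exact Finset.sum_congr rfl fun t _ => (hcast t).symm
  rw [h1, h2, h3, h4]

lemma xi_norm (k : ℕ) (p : ℤ) (q : ℕ) : ‖xi k p q‖ ≤ q := by
  unfold xi
  calc ‖∑ t ∈ Finset.range q, e ((t : ℝ) ^ k * p / q)‖
      ≤ ∑ t ∈ Finset.range q, ‖e ((t : ℝ) ^ k * p / q)‖ := norm_sum_le _ _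
    _ = ∑ t ∈ Finset.range q, (1 : ℝ) := by
        exact Finset.sum_congr rfl fun t _ => e_norm _
    _ = q := by simp

lemma partial_bound (k : ℕ) (p : ℤ) (q : ℕ) (hq : 1 ≤ q) (m : ℕ) :
    ‖(∑ i ∈ Finset.range m, e (((i + 1 : ℕ) : ℝ) ^ k * p / q))
      - (m : ℂ) * (xi k p q / q)‖ ≤ 2 * q := by
  have hqC : (q : ℂ) ≠ 0 := Nat.cast_ne_zero.2 (by omega)
  induction m using Nat.strong_induction_on with
  | _ m ih =>
    rcases lt_or_ge m q with hm | hm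
    · have hb1 : ‖∑ i ∈ Finset.range m, e (((i + 1 : ℕ) : ℝ) ^ k * p / q)‖ ≤ m := by
        calc ‖∑ i ∈ Finset.range m, e (((i + 1 : ℕ) : ℝ) ^ k * p / q)‖
            ≤ ∑ i ∈ Finset.range m, ‖e (((i + 1 : ℕ) : ℝ) ^ k * p / q)‖ := norm_sum_le _ _
          _ = ∑ i ∈ Finset.range m, (1 : ℝ) :=
              Finset.sum_congr rfl fun i _ => e_norm _
          _ = m := by simp
      have hb2 : ‖(m : ℂ) * (xi k p q / q)‖ ≤ m := by
        rw [norm_mul, norm_div]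
        have : ‖(m : ℂ)‖ = (m : ℝ) := by simp
        rw [this]
        have hxq : ‖xi k p q‖ / ‖(q : ℂ)‖ ≤ 1 := by
          rw [show ‖(q : ℂ)‖ = (q : ℝ) by simp]
          rw [div_le_one (by positivity)]
          exact xi_norm k p q
        calc (m : ℝ) * (‖xi k p q‖ / ‖(q : ℂ)‖) ≤ (m : ℝ) * 1 := by
              exact mul_le_mul_of_nonneg_left hxq (by positivity)
          _ = m := mul_one _
      calc ‖(∑ i ∈ Finset.range m, e (((i + 1 : ℕ) : ℝ) ^ k * p / q))
            - (m : ℂ) * (xi k p q / q)‖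
          ≤ ‖∑ i ∈ Finset.range m, e (((i + 1 : ℕ) : ℝ) ^ k * p / q)‖
            + ‖(m : ℂ) * (xi k p q / q)‖ := norm_sub_le _ _
        _ ≤ (m : ℝ) + m := add_le_add hb1 hb2
        _ ≤ 2 * q := by
            have : (m : ℝ) ≤ q := by exact_mod_cast hm.le
            linarith
    · have hmq : m - q ≤ m := Nat.sub_le m q
      have hsplit : ∑ i ∈ Finset.range m, e (((i + 1 : ℕ) : ℝ) ^ k * p / q)
          = (∑ i ∈ Finset.range (m - q), e (((i + 1 : ℕ) : ℝ) ^ k * p / q))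
            + ∑ i ∈ Finset.Ico (m - q) m, e (((i + 1 : ℕ) : ℝ) ^ k * p / q) :=
        (Finset.sum_range_add_sum_Ico _ hmq).symm
      have hico : ∑ i ∈ Finset.Ico (m - q) m, e (((i + 1 : ℕ) : ℝ) ^ k * p / q)
          = xi k p q := by
        rw [Finset.sum_Ico_eq_sum_range]
        have hqq : m - (m - q) = q := by omega
        rw [hqq]
        rw [← block_sum k p q hq (m - q + 1)]
        refine Finset.sum_congr rfl fun t _ => ?_
        have h5 : m - q + t + 1 = m - q + 1 + t := by omega
        rw [h5]
      have hcastm : (m : ℂ) = ((m - q : ℕ) : ℂ) + (q : ℂ) := by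
        push_cast [Nat.cast_sub hm]; ring
      have key : (∑ i ∈ Finset.range m, e (((i + 1 : ℕ) : ℝ) ^ k * p / q))
            - (m : ℂ) * (xi k p q / q)
          = (∑ i ∈ Finset.range (m - q), e (((i + 1 : ℕ) : ℝ) ^ k * p / q))
            - ((m - q : ℕ) : ℂ) * (xi k p q / q) := by
        rw [hsplit, hico, hcastm]
        have hqx : (q : ℂ) * (xi k p q / q) = xi k p q := by field_simp
        linear_combination -hqx
      rw [key]
      exact ih (m - q) (by omega)

/-- For `k ≥ 2` there is `C = C(k)` such that for `p/q` in lowest terms, real `x`, and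
`n ≥ 1` with `n^k |x - p/q| ≤ 1`, writing `β = x - p/q`, one has
`|∑_{l=1}^n e(l^k x) - (ξ_{p/q}/q) ∑_{l=1}^n e(l^k β)| ≤ C q`. -/
theorem gauss_sum_rational_approximation (k : ℕ) (hk : 2 ≤ k) :
    ∃ C : ℝ, ∀ (p : ℤ) (q : ℕ), 1 ≤ q → Int.gcd p q = 1 →
      ∀ x : ℝ, ∀ n : ℕ, 0 < n → (n : ℝ) ^ k * |x - (p : ℝ) / q| ≤ 1 →
        ‖(∑ l ∈ Finset.Icc 1 n, e ((l : ℝ) ^ k * x))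
            - xi k p q / q * ∑ l ∈ Finset.Icc 1 n, e ((l : ℝ) ^ k * (x - (p : ℝ) / q))‖
          ≤ C * q := by
  refine ⟨2 + 4 * Real.pi, ?_⟩
  intro p q hq _ x n hn hnk
  have hqR : (0 : ℝ) < q := by exact_mod_cast hq
  set β : ℝ := x - (p : ℝ) / q with hβ
  set c : ℂ := xi k p q / q with hc
  set u : ℕ → ℂ := fun i => e (((i + 1 : ℕ) : ℝ) ^ k * β) with hu
  set a : ℕ → ℂ := fun i => e (((i + 1 : ℕ) : ℝ) ^ k * p / q) with ha
  -- rewrite the two Icc sums as range sums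
  have h1 : ∑ l ∈ Finset.Icc 1 n, e ((l : ℝ) ^ k * x)
      = ∑ i ∈ Finset.range n, a i * u i := by
    rw [show Finset.Icc 1 n = Finset.Ico 1 (n + 1) by rw [Finset.Ico_add_one_right_eq_Icc],
      Finset.sum_Ico_eq_sum_range]
    simp only [Nat.add_sub_cancel]
    refine Finset.sum_congr rfl fun i _ => ?_
    have hx : ((1 + i : ℕ) : ℝ) ^ k * x
        = ((i + 1 : ℕ) : ℝ) ^ k * p / q + ((i + 1 : ℕ) : ℝ) ^ k * β := by
      rw [hβ]; push_cast; ring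
    rw [hx, e_add]
  have h2 : ∑ l ∈ Finset.Icc 1 n, e ((l : ℝ) ^ k * (x - (p : ℝ) / q))
      = ∑ i ∈ Finset.range n, u i := by
    rw [show Finset.Icc 1 n = Finset.Ico 1 (n + 1) by rw [Finset.Ico_add_one_right_eq_Icc],
      Finset.sum_Ico_eq_sum_range]
    simp only [Nat.add_sub_cancel]
    refine Finset.sum_congr rfl fun i _ => ?_
    rw [hu, hβ]
    congr 2
    push_cast; ring
  rw [h1, h2]
  have h3 : (∑ i ∈ Finset.range n, a i * u i) - c * ∑ i ∈ Finset.range n, u i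
      = ∑ i ∈ Finset.range n, u i * (a i - c) := by
    rw [Finset.mul_sum, ← Finset.sum_sub_distrib]
    refine Finset.sum_congr rfl fun i _ => by ring
  rw [h3]
  -- Abel summation
  set v : ℕ → ℂ := fun i => a i - c with hv
  have habel := Finset.sum_range_by_parts u v n
  simp only [smul_eq_mul] at habel
  rw [habel]
  -- partial sums of v are bounded by 2q
  have hV : ∀ m : ℕ, ‖∑ j ∈ Finset.range m, v j‖ ≤ 2 * q := by
    intro m
    have : ∑ j ∈ Finset.range m, v j
        = (∑ j ∈ Finset.range m, e (((j + 1 : ℕ) : ℝ) ^ k * p / q)) - (m : ℂ) * (xi k p q / q) := by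
      rw [hv, Finset.sum_sub_distrib, Finset.sum_const, Finset.card_range, nsmul_eq_mul, hc]
    rw [this]
    exact partial_bound k p q hq m
  -- bound the two pieces
  have hβnn : (0 : ℝ) ≤ |β| := abs_nonneg _
  have hterm : ∀ i : ℕ, ‖(u (i + 1) - u i) * ∑ j ∈ Finset.range (i + 1), v j‖
      ≤ 2 * Real.pi * ((((i + 2 : ℕ) : ℝ)) ^ k - (((i + 1 : ℕ) : ℝ)) ^ k) * |β| * (2 * q) := by
    intro i
    rw [norm_mul]
    have hd : ‖u (i + 1) - u i‖
        ≤ 2 * Real.pi * ((((i + 2 : ℕ) : ℝ)) ^ k - (((i + 1 : ℕ) : ℝ)) ^ k) * |β| := by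
      have := e_dist (((i + 1 + 1 : ℕ) : ℝ) ^ k * β) (((i + 1 : ℕ) : ℝ) ^ k * β)
      have heq : ((i + 1 + 1 : ℕ) : ℝ) ^ k * β - ((i + 1 : ℕ) : ℝ) ^ k * β
          = ((((i + 2 : ℕ) : ℝ)) ^ k - (((i + 1 : ℕ) : ℝ)) ^ k) * β := by
        push_cast; ring
      have hpow : (((i + 1 : ℕ) : ℝ)) ^ k ≤ (((i + 2 : ℕ) : ℝ)) ^ k := by
        apply pow_le_pow_left₀ (by positivity)
        push_cast; linarith
      calc ‖u (i + 1) - u i‖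
          ≤ 2 * Real.pi * |((i + 1 + 1 : ℕ) : ℝ) ^ k * β - ((i + 1 : ℕ) : ℝ) ^ k * β| := this
        _ = 2 * Real.pi * ((((i + 2 : ℕ) : ℝ)) ^ k - (((i + 1 : ℕ) : ℝ)) ^ k) * |β| := by
            rw [heq, abs_mul, abs_of_nonneg (by linarith : (0:ℝ) ≤ (((i + 2 : ℕ) : ℝ)) ^ k - (((i + 1 : ℕ) : ℝ)) ^ k)]
            ring
    calc ‖u (i + 1) - u i‖ * ‖∑ j ∈ Finset.range (i + 1), v j‖
        ≤ (2 * Real.pi * ((((i + 2 : ℕ) : ℝ)) ^ k - (((i + 1 : ℕ) : ℝ)) ^ k) * |β|) * (2 * q) := by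
          apply mul_le_mul hd (hV (i + 1)) (norm_nonneg _)
          have hpow : (((i + 1 : ℕ) : ℝ)) ^ k ≤ (((i + 2 : ℕ) : ℝ)) ^ k := by
            apply pow_le_pow_left₀ (by positivity)
            push_cast; linarith
          exact mul_nonneg (mul_nonneg (by positivity) (by linarith)) (abs_nonneg _)
      _ = 2 * Real.pi * ((((i + 2 : ℕ) : ℝ)) ^ k - (((i + 1 : ℕ) : ℝ)) ^ k) * |β| * (2 * q) := rfl
  have htel : ∑ i ∈ Finset.range (n - 1), ((((i + 2 : ℕ) : ℝ)) ^ k - (((i + 1 : ℕ) : ℝ)) ^ k)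
      = (n : ℝ) ^ k - 1 := by
    have := Finset.sum_range_sub (fun i => (((i + 1 : ℕ) : ℝ)) ^ k) (n - 1)
    have hnn : ((n - 1 : ℕ) : ℝ) + 1 = (n : ℝ) := by
      have : (1 : ℕ) ≤ n := hn
      push_cast [Nat.cast_sub this]; ring
    calc ∑ i ∈ Finset.range (n - 1), ((((i + 2 : ℕ) : ℝ)) ^ k - (((i + 1 : ℕ) : ℝ)) ^ k)
        = ∑ i ∈ Finset.range (n - 1),
            (((fun i => (((i + 1 : ℕ) : ℝ)) ^ k) (i + 1)) - ((fun i => (((i + 1 : ℕ) : ℝ)) ^ k) i)) := by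
          refine Finset.sum_congr rfl fun i _ => ?_
          push_cast; ring_nf
      _ = (((n - 1 : ℕ) : ℝ) + 1) ^ k - (((0 + 1 : ℕ) : ℝ)) ^ k := by
          rw [this]; push_cast; ring_nf
      _ = (n : ℝ) ^ k - 1 := by rw [hnn]; norm_num
  -- final estimate
  have hmain : ‖u (n - 1) * ∑ j ∈ Finset.range n, v j
        - ∑ i ∈ Finset.range (n - 1), (u (i + 1) - u i) * ∑ j ∈ Finset.range (i + 1), v j‖
      ≤ 2 * q + 2 * Real.pi * ((n : ℝ) ^ k - 1) * |β| * (2 * q) := by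
    calc ‖u (n - 1) * ∑ j ∈ Finset.range n, v j
          - ∑ i ∈ Finset.range (n - 1), (u (i + 1) - u i) * ∑ j ∈ Finset.range (i + 1), v j‖
        ≤ ‖u (n - 1) * ∑ j ∈ Finset.range n, v j‖
          + ‖∑ i ∈ Finset.range (n - 1), (u (i + 1) - u i) * ∑ j ∈ Finset.range (i + 1), v j‖ :=
          norm_sub_le _ _
      _ ≤ 1 * (2 * q) + ∑ i ∈ Finset.range (n - 1),
            2 * Real.pi * ((((i + 2 : ℕ) : ℝ)) ^ k - (((i + 1 : ℕ) : ℝ)) ^ k) * |β| * (2 * q) := by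
          apply add_le_add
          · rw [norm_mul, e_norm]
            exact mul_le_mul_of_nonneg_left (hV n) (by norm_num)
          · exact (norm_sum_le _ _).trans (Finset.sum_le_sum fun i _ => hterm i)
      _ = 2 * q + 2 * Real.pi * ((n : ℝ) ^ k - 1) * |β| * (2 * q) := by
          rw [one_mul]
          congr 1
          rw [← htel]
          simp only [Finset.mul_sum, Finset.sum_mul]
  refine hmain.trans ?_
  have hβ1 : ((n : ℝ) ^ k - 1) * |β| ≤ 1 := by
    have h0 : ((n : ℝ) ^ k - 1) * |β| ≤ (n : ℝ) ^ k * |β| := by nlinarith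
    linarith
  have hπ : (0 : ℝ) < Real.pi := Real.pi_pos
  have h4 : 2 * Real.pi * ((n : ℝ) ^ k - 1) * |β| * (2 * q)
      = (4 * Real.pi * q) * (((n : ℝ) ^ k - 1) * |β|) := by ring
  have h5 : (4 * Real.pi * q) * (((n : ℝ) ^ k - 1) * |β|) ≤ (4 * Real.pi * q) * 1 :=
    mul_le_mul_of_nonneg_left hβ1 (by positivity)
  nlinarith [h4, h5, hqR, hπ]
end

section
/- Let $k \in \mathbb{N}$ with $k \geq 2$. There exists a constant $C = C(k)$ such that for every real $\beta > 0$ and every integer $m \geq 1$ with $m \leq N := \lfloor \beta^{-1/k} \rfloor$, one has $\Big| \int_{m}^{N} \frac{e(y^k \beta)}{y}\, dy \; - \; \frac{1}{k} \ln^{+}\big( \beta^{-1} m^{-k} \big) \Big| \leq C$, where $\ln^{+} y := \max\{\ln y, 0\}$. -/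
lemma norm_e_sub_one_le (t : ℝ) : ‖e t - 1‖ ≤ 2 * Real.pi * |t| := by
  have h : (2 * Real.pi * Complex.I * t : ℂ) = ((2 * Real.pi * t : ℝ) : ℂ) * Complex.I := by
    push_cast; ring
  rw [e, h]
  calc ‖Complex.exp (((2 * Real.pi * t : ℝ) : ℂ) * Complex.I) - 1‖
      ≤ |2 * Real.pi * t| := norm_exp_mul_I_sub_one_le _
    _ = 2 * Real.pi * |t| := by
        rw [abs_mul, abs_of_pos (by positivity : (0:ℝ) < 2 * Real.pi)]

/-- For `k ≥ 2` there is `C = C(k)` such that for every `β > 0` and every integer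
`1 ≤ m ≤ N := ⌊β^{-1/k}⌋`, one has
`|∫_m^N e(y^k β)/y dy - (1/k) ln⁺(β⁻¹ m^{-k})| ≤ C`. -/
theorem integral_asymptotics (k : ℕ) (hk : 2 ≤ k) :
    ∃ C : ℝ, ∀ β : ℝ, 0 < β → ∀ m : ℕ, 1 ≤ m → m ≤ ⌊β ^ (-(1 : ℝ) / k)⌋₊ →
      ‖(∫ y in (m : ℝ)..(⌊β ^ (-(1 : ℝ) / k)⌋₊ : ℝ), e (y ^ k * β) / (y : ℂ))
          - ((1 / k : ℝ) * max (Real.log (β⁻¹ * (m : ℝ) ^ (-(k : ℤ)))) 0 : ℝ)‖ ≤ C := by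
  refine ⟨2 * Real.pi + 1, fun β hβ m hm hmN => ?_⟩
  have hk0 : (k : ℝ) ≠ 0 := by positivity
  set B := β ^ (-(1 : ℝ) / k) with hB
  set N := ⌊B⌋₊ with hN
  have hB0 : 0 < B := Real.rpow_pos_of_pos hβ _
  have hNB : (N : ℝ) ≤ B := Nat.floor_le hB0.le
  have hN1 : 1 ≤ N := hm.trans hmN
  have hN1' : (1 : ℝ) ≤ N := by exact_mod_cast hN1
  have hBN : B < N + 1 := Nat.lt_floor_add_one B
  have hB2N : B ≤ 2 * N := by linarith
  have hmN' : (m : ℝ) ≤ N := by exact_mod_cast hmN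
  have hm1 : (1 : ℝ) ≤ m := by exact_mod_cast hm
  have hBk : B ^ k = β⁻¹ := by
    rw [hB, ← Real.rpow_natCast (β ^ (-(1 : ℝ) / k)) k, ← Real.rpow_mul hβ.le,
      div_mul_cancel₀ (-(1 : ℝ)) hk0, Real.rpow_neg_one]
  have hβNk : β * (N : ℝ) ^ k ≤ 1 := by
    have h1 : (N : ℝ) ^ k ≤ B ^ k := pow_le_pow_left₀ (by positivity) hNB k
    have h2 : β * (N : ℝ) ^ k ≤ β * B ^ k := by nlinarith
    rw [hBk, mul_inv_cancel₀ hβ.ne'] at h2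
    exact h2
  have hβmk : β * (m : ℝ) ^ k ≤ 1 := by
    have h1 : (m : ℝ) ^ k ≤ (N : ℝ) ^ k := pow_le_pow_left₀ (by positivity) hmN' k
    nlinarith
  -- log⁺ simplification
  have harg : 1 ≤ β⁻¹ * (m : ℝ) ^ (-(k : ℤ)) := by
    rw [zpow_neg, zpow_natCast, ← mul_inv]
    rw [one_le_inv_iff₀]
    exact ⟨by positivity, hβmk⟩
  have hmax : max (Real.log (β⁻¹ * (m : ℝ) ^ (-(k : ℤ)))) 0
      = Real.log (β⁻¹ * (m : ℝ) ^ (-(k : ℤ))) := max_eq_left (Real.log_nonneg harg)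
  have hlogval : (1 / k : ℝ) * Real.log (β⁻¹ * (m : ℝ) ^ (-(k : ℤ)))
      = Real.log B - Real.log m := by
    rw [Real.log_mul (by positivity) (by positivity), Real.log_inv, Real.log_zpow,
      hB, Real.log_rpow hβ]
    push_cast
    field_simp
    ring
  -- integrability
  have hsub : ∀ y ∈ Set.uIcc (m : ℝ) (N : ℝ), 1 ≤ y := by
    rw [Set.uIcc_of_le hmN']
    intro y hy
    exact hm1.trans hy.1
  have hcf : ContinuousOn (fun y : ℝ => e (y ^ k * β) / (y : ℂ)) (Set.uIcc (m : ℝ) N) := by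
    apply ContinuousOn.div
    · apply Continuous.continuousOn
      simp only [e]
      fun_prop
    · fun_prop
    · intro y hy
      have := hsub y hy
      exact_mod_cast (by linarith : y ≠ 0)
  have hcg : ContinuousOn (fun y : ℝ => (1 : ℂ) / (y : ℂ)) (Set.uIcc (m : ℝ) N) := by
    apply ContinuousOn.div
    · fun_prop
    · fun_prop
    · intro y hy
      have := hsub y hy
      exact_mod_cast (by linarith : y ≠ 0)
  have hif : IntervalIntegrable (fun y : ℝ => e (y ^ k * β) / (y : ℂ)) MeasureTheory.volume m N :=
    hcf.intervalIntegrable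
  have hig : IntervalIntegrable (fun y : ℝ => (1 : ℂ) / (y : ℂ)) MeasureTheory.volume m N :=
    hcg.intervalIntegrable
  have hgval : (∫ y in (m : ℝ)..(N : ℝ), (1 : ℂ) / (y : ℂ))
      = ((Real.log ((N : ℝ) / m) : ℝ) : ℂ) := by
    calc (∫ y in (m : ℝ)..(N : ℝ), (1 : ℂ) / (y : ℂ))
        = ∫ y in (m : ℝ)..(N : ℝ), Complex.ofReal (1 / y) :=
          intervalIntegral.integral_congr (fun y _ => by push_cast; ring)
      _ = Complex.ofReal (∫ y in (m : ℝ)..(N : ℝ), 1 / y) := intervalIntegral.integral_ofReal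
      _ = _ := by rw [integral_one_div_of_pos (by positivity) (by positivity)]
  have hsplit : (∫ y in (m : ℝ)..(N : ℝ), e (y ^ k * β) / (y : ℂ))
      = (∫ y in (m : ℝ)..(N : ℝ), (e (y ^ k * β) / (y : ℂ) - 1 / (y : ℂ)))
        + ∫ y in (m : ℝ)..(N : ℝ), (1 : ℂ) / (y : ℂ) := by
    rw [intervalIntegral.integral_sub hif hig]; ring
  -- bound on the error integral
  have hA : ‖∫ y in (m : ℝ)..(N : ℝ), (e (y ^ k * β) / (y : ℂ) - 1 / (y : ℂ))‖
      ≤ 2 * Real.pi := by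
    have hbound : ∀ᵐ y ∂(MeasureTheory.volume.restrict (Set.uIoc (m : ℝ) (N : ℝ))),
        ‖e (y ^ k * β) / (y : ℂ) - 1 / (y : ℂ)‖ ≤ 2 * Real.pi * β * y ^ (k - 1) := by
      apply MeasureTheory.ae_restrict_of_forall_mem measurableSet_uIoc
      intro y hy
      rw [Set.uIoc_of_le hmN'] at hy
      have hy1 : 1 ≤ y := hm1.trans hy.1.le
      have hy0 : 0 < y := by linarith
      have h1 : e (y ^ k * β) / (y : ℂ) - 1 / (y : ℂ) = (e (y ^ k * β) - 1) / (y : ℂ) := by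
        ring
      rw [h1, norm_div]
      have h2 : ‖(y : ℂ)‖ = y := by
        rw [Complex.norm_real, Real.norm_eq_abs, abs_of_pos hy0]
      rw [h2, div_le_iff₀ hy0]
      calc ‖e (y ^ k * β) - 1‖ ≤ 2 * Real.pi * |y ^ k * β| := norm_e_sub_one_le _
        _ = 2 * Real.pi * (y ^ k * β) := by
            rw [abs_of_pos (by positivity)]
        _ = 2 * Real.pi * β * y ^ (k - 1) * y := by
            have : y ^ k = y ^ (k - 1) * y := by
              conv_lhs => rw [show k = (k - 1) + 1 by omega]
              rw [pow_succ]
            rw [this]; ring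
    have hgint : IntervalIntegrable (fun y : ℝ => 2 * Real.pi * β * y ^ (k - 1))
        MeasureTheory.volume m N := by
      apply Continuous.intervalIntegrable
      fun_prop
    calc ‖∫ y in (m : ℝ)..(N : ℝ), (e (y ^ k * β) / (y : ℂ) - 1 / (y : ℂ))‖
        ≤ |∫ y in (m : ℝ)..(N : ℝ), 2 * Real.pi * β * y ^ (k - 1)| :=
          intervalIntegral.norm_integral_le_abs_of_norm_le hbound hgint
      _ = ∫ y in (m : ℝ)..(N : ℝ), 2 * Real.pi * β * y ^ (k - 1) := by
          apply abs_of_nonneg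
          apply intervalIntegral.integral_nonneg hmN'
          intro y hy
          have : (0:ℝ) ≤ y := le_trans (by positivity) hy.1
          positivity
      _ = 2 * Real.pi * β * (((N : ℝ) ^ k - (m : ℝ) ^ k) / k) := by
          rw [intervalIntegral.integral_const_mul, integral_pow]
          have h1 : k - 1 + 1 = k := by omega
          have h2 : ((k - 1 : ℕ) : ℝ) = (k : ℝ) - 1 := by
            push_cast [Nat.cast_sub (by omega : 1 ≤ k)]
            ring
          rw [h1, h2]
          have : (k : ℝ) - 1 + 1 = (k : ℝ) := by ring
          rw [this]
      _ ≤ 2 * Real.pi := by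
          have hπ : (0 : ℝ) < Real.pi := Real.pi_pos
          have hk1 : (1 : ℝ) ≤ k := by exact_mod_cast (by omega : 1 ≤ k)
          have hmk0 : (0 : ℝ) ≤ (m : ℝ) ^ k := by positivity
          have hx0 : (0 : ℝ) ≤ (N : ℝ) ^ k - (m : ℝ) ^ k := by
            nlinarith [pow_le_pow_left₀ (by positivity : (0:ℝ) ≤ (m:ℝ)) hmN' k]
          have hd : ((N : ℝ) ^ k - (m : ℝ) ^ k) / k ≤ (N : ℝ) ^ k - (m : ℝ) ^ k :=
            div_le_self hx0 hk1
          have h2 := mul_le_mul_of_nonneg_left hd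
            (by positivity : (0:ℝ) ≤ 2 * Real.pi * β)
          nlinarith [mul_nonneg (mul_nonneg (by positivity : (0:ℝ) ≤ 2 * Real.pi) hβ.le) hmk0]
  -- final assembly
  rw [hmax, hlogval, hsplit, hgval]
  have hlogdiv : Real.log ((N : ℝ) / m) = Real.log N - Real.log m :=
    Real.log_div (by positivity) (by positivity)
  have hlog2 : |Real.log (N : ℝ) - Real.log B| ≤ 1 := by
    have h1 : Real.log (N : ℝ) ≤ Real.log B := Real.log_le_log (by positivity) hNB
    have h2 : Real.log B ≤ Real.log 2 + Real.log N := by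
      calc Real.log B ≤ Real.log (2 * N) := Real.log_le_log hB0 hB2N
        _ = Real.log 2 + Real.log N := Real.log_mul (by norm_num) (by positivity)
    have h3 : Real.log 2 < 1 := by
      have := Real.log_two_lt_d9
      linarith
    rw [abs_le]
    constructor <;> linarith
  calc ‖(∫ y in (m : ℝ)..(N : ℝ), (e (y ^ k * β) / (y : ℂ) - 1 / (y : ℂ)))
        + ((Real.log ((N : ℝ) / m) : ℝ) : ℂ) - ((Real.log B - Real.log m : ℝ) : ℂ)‖
      = ‖(∫ y in (m : ℝ)..(N : ℝ), (e (y ^ k * β) / (y : ℂ) - 1 / (y : ℂ)))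
        + ((Real.log (N : ℝ) - Real.log B : ℝ) : ℂ)‖ := by
        rw [hlogdiv]
        congr 1
        simp only [Complex.ofReal_sub]
        ring
    _ ≤ ‖∫ y in (m : ℝ)..(N : ℝ), (e (y ^ k * β) / (y : ℂ) - 1 / (y : ℂ))‖
        + ‖((Real.log (N : ℝ) - Real.log B : ℝ) : ℂ)‖ := norm_add_le _ _
    _ ≤ 2 * Real.pi + 1 := by
        apply add_le_add hA
        rw [Complex.norm_real, Real.norm_eq_abs]
        exact hlog2
end
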